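/- arXiv:2510.14870 — 5 statements merged into one kernel-verified Lean document; each statement's English description precedes it below -/
import Mathlib

section
/- Let 𝓑 be a nonempty set and M_k, M_{k+1} : 𝓑 → ℝ with M_k(x) − M_{k+1}(x) > 0 for all x ∈ 𝓑. Suppose B_k ≥ 0 and B_{k+1} < 0 are real constants such that M_k(x) ≤ B_k and M_{k+1}(x) ≤ B_{k+1} for all x ∈ 𝓑. Then for every x ∈ 𝓑, (B_k/(B_k − B_{k+1}))·(M_k(x) − M_{k+1}(x)) − M_k(x) ≥ 0; equivalently, sup_{x∈𝓑} M_k(x)/(M_k(x) − M_{k+1}(x)) ≤ B_k/(B_k − B_{k+1}). -/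
/-- core inequality of Proposition 2.3: from upper bounds `Bk ≥ 0` and
`Bk1 < 0` on `Mk` and `Mk1` one gets the pointwise inequality
`(Bk/(Bk − Bk1))·(Mk(x) − Mk1(x)) − Mk(x) ≥ 0`, equivalently the bound
`sup_x Mk(x)/(Mk(x) − Mk1(x)) ≤ Bk/(Bk − Bk1)`. -/
theorem stmt_2 {α : Type*} (𝓑 : Set α) (hne : 𝓑.Nonempty) (Mk Mk1 : α → ℝ)
    (hpos : ∀ x ∈ 𝓑, 0 < Mk x - Mk1 x)
    (Bk Bk1 : ℝ) (hBk : 0 ≤ Bk) (hBk1 : Bk1 < 0)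
    (hMk : ∀ x ∈ 𝓑, Mk x ≤ Bk) (hMk1 : ∀ x ∈ 𝓑, Mk1 x ≤ Bk1) :
    (∀ x ∈ 𝓑, 0 ≤ Bk / (Bk - Bk1) * (Mk x - Mk1 x) - Mk x) ∧
    sSup ((fun x => Mk x / (Mk x - Mk1 x)) '' 𝓑) ≤ Bk / (Bk - Bk1) := by
  have hd : (0:ℝ) < Bk - Bk1 := by linarith
  have key : ∀ x ∈ 𝓑, 0 ≤ Bk / (Bk - Bk1) * (Mk x - Mk1 x) - Mk x := by
    intro x hx
    have h1 := hMk x hx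
    have h2 := hMk1 x hx
    set c := Bk / (Bk - Bk1) with hc
    have hc0 : 0 ≤ c := div_nonneg hBk hd.le
    have hc1 : c ≤ 1 := by
      rw [hc, div_le_one hd]; linarith
    have hceq : c * (Bk - Bk1) = Bk := div_mul_cancel₀ Bk hd.ne'
    nlinarith [mul_le_mul_of_nonneg_left h1 (sub_nonneg.2 hc1),
      mul_le_mul_of_nonneg_left h2 hc0]
  refine ⟨key, csSup_le (hne.image _) ?_⟩
  rintro y ⟨x, hx, rfl⟩
  have := key x hx
  rw [div_le_iff₀ (hpos x hx)]
  linarith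
end

section
/- Let 𝓑 ⊆ ℝⁿ, let f : 𝓑 → ℝⁿ and A : 𝓑 → ℝ^{m×m} be continuous, and define Φ(x,z) = zᵀA(x)z and ℓ(x,z) = A(x)z − Φ(x,z)z. Let V : ℝⁿ × ℝ^m → ℝ be continuously differentiable. Let x : [0,∞) → 𝓑 be a differentiable solution of x′(t) = f(x(t)) whose range is bounded with closure contained in 𝓑, and let y : [0,∞) → ℝ^m be differentiable with y′(t) = A(x(t))y(t) and y(0) ≠ 0. Then limsup_{t→∞} (1/t) log|y(t)| ≤ sup { Φ(x,z) + f(x)·D_xV(x,z) + ℓ(x,z)·D_zV(x,z) : x ∈ 𝓑, z ∈ ℝ^m, |z| = 1 }. -/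
open Filter Set Bornology

/-- The action of an `m × m` real matrix on `EuclideanSpace ℝ (Fin m)`. -/
noncomputable def mulVecE {m : ℕ} (A : Matrix (Fin m) (Fin m) ℝ) (v : EuclideanSpace ℝ (Fin m)) :
    EuclideanSpace ℝ (Fin m) :=
  Matrix.toEuclideanCLM (𝕜 := ℝ) A v

/-- `Φ(x,z) = zᵀ A(x) z`, the instantaneous growth rate. -/
noncomputable def Phi {n m : ℕ} (A : EuclideanSpace ℝ (Fin n) → Matrix (Fin m) (Fin m) ℝ)
    (x : EuclideanSpace ℝ (Fin n)) (z : EuclideanSpace ℝ (Fin m)) : ℝ :=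
  inner ℝ z (mulVecE (A x) z)

/-- `ℓ(x,z) = A(x)z − Φ(x,z)z`, the tangent dynamics projected on the unit sphere. -/
noncomputable def ell {n m : ℕ} (A : EuclideanSpace ℝ (Fin n) → Matrix (Fin m) (Fin m) ℝ)
    (x : EuclideanSpace ℝ (Fin n)) (z : EuclideanSpace ℝ (Fin m)) :
    EuclideanSpace ℝ (Fin m) :=
  mulVecE (A x) z - Phi A x z • z

lemma mulVecE_smul {m : ℕ} (A : Matrix (Fin m) (Fin m) ℝ) (c : ℝ) (v : EuclideanSpace ℝ (Fin m)) :
    mulVecE A (c • v) = c • mulVecE A v := by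
  simp [mulVecE, map_smul]

lemma phi_scale {n m : ℕ} (A : EuclideanSpace ℝ (Fin n) → Matrix (Fin m) (Fin m) ℝ)
    (x : EuclideanSpace ℝ (Fin n)) (v : EuclideanSpace ℝ (Fin m)) (hv : v ≠ 0) :
    Phi A x (‖v‖⁻¹ • v) = (inner ℝ v (mulVecE (A x) v) : ℝ) / ‖v‖ ^ 2 := by
  have h : ‖v‖ ≠ 0 := norm_ne_zero_iff.2 hv
  simp only [Phi, mulVecE_smul, inner_smul_left, inner_smul_right, RCLike.conj_to_real,
    map_inv₀]
  field_simp

lemma ell_scale {n m : ℕ} (A : EuclideanSpace ℝ (Fin n) → Matrix (Fin m) (Fin m) ℝ)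
    (x : EuclideanSpace ℝ (Fin n)) (v : EuclideanSpace ℝ (Fin m)) (hv : v ≠ 0) :
    ell A x (‖v‖⁻¹ • v)
      = ‖v‖⁻¹ • mulVecE (A x) v
        + (-((inner ℝ v (mulVecE (A x) v) : ℝ) / ‖v‖) / ‖v‖ ^ 2) • v := by
  have h : ‖v‖ ≠ 0 := norm_ne_zero_iff.2 hv
  rw [ell, phi_scale A x v hv, mulVecE_smul, smul_smul, sub_eq_add_neg, ← neg_smul]
  congr 1
  rw [neg_div, neg_smul, ← neg_smul]
  congr 1
  rw [neg_inj]
  field_simp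

lemma aux_mono (H h : ℝ → ℝ) (hd : ∀ t ∈ Ici (0:ℝ), HasDerivWithinAt H (h t) (Ici 0) t)
    (hh : ∀ t ∈ Ici (0:ℝ), 0 ≤ h t) : MonotoneOn H (Ici 0) := by
  apply monotoneOn_of_hasDerivWithinAt_nonneg (convex_Ici 0)
    (fun t ht => (hd t ht).continuousWithinAt)
    (f' := h)
  · intro t ht
    rw [interior_Ici] at ht
    exact ((hd t (Set.mem_Ici.2 (le_of_lt (Set.mem_Ioi.1 ht)))).mono (by rw [interior_Ici]; exact Ioi_subset_Ici_self))
  · intro t ht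
    rw [interior_Ici] at ht
    exact hh t (Set.mem_Ici.2 (le_of_lt (Set.mem_Ioi.1 ht)))

/-- per-trajectory form of Proposition 2.2(1), the sphere projection bound:
along a bounded trajectory of `x' = f(x)` in `𝓑`, the top exponent of the linear tangent
dynamics `y' = A(x(t))y` is bounded above by
`sup { Φ(x,z) + f(x)·D_xV(x,z) + ℓ(x,z)·D_zV(x,z) : x ∈ 𝓑, |z| = 1 }`. -/
theorem stmt_4 {n m : ℕ} (𝓑 : Set (EuclideanSpace ℝ (Fin n)))
    (f : EuclideanSpace ℝ (Fin n) → EuclideanSpace ℝ (Fin n))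
    (A : EuclideanSpace ℝ (Fin n) → Matrix (Fin m) (Fin m) ℝ)
    (hf : ContinuousOn f 𝓑) (hA : ContinuousOn A 𝓑)
    (V : EuclideanSpace ℝ (Fin n) × EuclideanSpace ℝ (Fin m) → ℝ) (hV : ContDiff ℝ 1 V)
    (x : ℝ → EuclideanSpace ℝ (Fin n))
    (hxmem : ∀ t ∈ Ici (0 : ℝ), x t ∈ 𝓑)
    (hxode : ∀ t ∈ Ici (0 : ℝ), HasDerivWithinAt x (f (x t)) (Ici 0) t)
    (hxbdd : IsBounded (x '' Ici 0))
    (hxcl : closure (x '' Ici 0) ⊆ 𝓑)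
    (y : ℝ → EuclideanSpace ℝ (Fin m)) (hy0 : y 0 ≠ 0)
    (hyode : ∀ t ∈ Ici (0 : ℝ), HasDerivWithinAt y (mulVecE (A (x t)) (y t)) (Ici 0) t) :
    limsup (fun t => ((1 / t * Real.log ‖y t‖ : ℝ) : EReal)) atTop
      ≤ ⨆ p : {q : EuclideanSpace ℝ (Fin n) × EuclideanSpace ℝ (Fin m) //
            q.1 ∈ 𝓑 ∧ ‖q.2‖ = 1},
          ((Phi A p.val.1 p.val.2
              + fderiv ℝ V p.val (f p.val.1, ell A p.val.1 p.val.2) : ℝ) : EReal) := by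
  classical
  -- notation
  set S := ⨆ p : {q : EuclideanSpace ℝ (Fin n) × EuclideanSpace ℝ (Fin m) //
            q.1 ∈ 𝓑 ∧ ‖q.2‖ = 1},
          ((Phi A p.val.1 p.val.2
              + fderiv ℝ V p.val (f p.val.1, ell A p.val.1 p.val.2) : ℝ) : EReal) with hSdef
  rcases eq_top_or_lt_top S with htop | hlt
  · rw [htop]; exact le_top
  -- the compact closure of the trajectory
  have hKcomp : IsCompact (closure (x '' Ici 0)) :=
    Metric.isCompact_of_isClosed_isBounded isClosed_closure hxbdd.closure
  have hxK : ∀ t ∈ Ici (0:ℝ), x t ∈ closure (x '' Ici 0) := fun t ht =>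
    subset_closure (mem_image_of_mem x ht)
  -- uniform bound on the operator norms
  have hTcont : Continuous (fun B : Matrix (Fin m) (Fin m) ℝ =>
      (Matrix.toEuclideanCLM (𝕜 := ℝ) B :
        EuclideanSpace ℝ (Fin m) →L[ℝ] EuclideanSpace ℝ (Fin m))) :=
    LinearMap.continuous_of_finiteDimensional
      { toFun := fun B => Matrix.toEuclideanCLM (𝕜 := ℝ) B,
        map_add' := fun a b => map_add _ a b,
        map_smul' := fun c a => map_smul _ c a }
  obtain ⟨M, hM⟩ := hKcomp.exists_bound_of_continuousOn
    (hTcont.comp_continuousOn (hA.mono hxcl))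
  have hMv : ∀ t ∈ Ici (0:ℝ), ∀ v : EuclideanSpace ℝ (Fin m),
      ‖mulVecE (A (x t)) v‖ ≤ M * ‖v‖ := by
    intro t ht v
    exact (ContinuousLinearMap.le_opNorm _ v).trans
      (mul_le_mul_of_nonneg_right (hM _ (hxK t ht)) (norm_nonneg v))
  -- the squared norm and its derivative
  set q : ℝ → ℝ := fun s => (inner ℝ (y s) (y s) : ℝ) with hqdef
  have hqy : ∀ s, q s = ‖y s‖ ^ 2 := fun s => real_inner_self_eq_norm_sq _
  have hq : ∀ t ∈ Ici (0:ℝ), HasDerivWithinAt q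
      (2 * (inner ℝ (y t) (mulVecE (A (x t)) (y t)) : ℝ)) (Ici 0) t := by
    intro t ht
    have := (hyode t ht).inner ℝ (hyode t ht)
    exact this.congr_deriv (by rw [real_inner_comm]; ring)
  -- the solution never vanishes
  have hypos : ∀ t ∈ Ici (0:ℝ), 0 < ‖y t‖ := by
    intro t ht
    have hmono : MonotoneOn (fun s => Real.exp (2*M*s) * q s) (Ici 0) := by
      apply aux_mono _ (fun s => Real.exp (2*M*s) *
        (2*M * q s + 2 * (inner ℝ (y s) (mulVecE (A (x s)) (y s)) : ℝ)))
      · intro s hs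
        have hE : HasDerivWithinAt (fun s => Real.exp (2*M*s)) (Real.exp (2*M*s) * (2*M)) (Ici 0) s := by
          have h1 : HasDerivAt (fun s : ℝ => 2*M*s) (2*M) s := by
            simpa using (hasDerivAt_id s).const_mul (2*M)
          exact (h1.exp).hasDerivWithinAt
        have := hE.mul (hq s hs)
        exact this.congr_deriv (by ring)
      · intro s hs
        have h1 : |(inner ℝ (y s) (mulVecE (A (x s)) (y s)) : ℝ)| ≤ M * q s := by
          calc |(inner ℝ (y s) (mulVecE (A (x s)) (y s)) : ℝ)|
              ≤ ‖y s‖ * ‖mulVecE (A (x s)) (y s)‖ := abs_real_inner_le_norm _ _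
            _ ≤ ‖y s‖ * (M * ‖y s‖) :=
                mul_le_mul_of_nonneg_left (hMv s hs _) (norm_nonneg _)
            _ = M * q s := by rw [hqy]; ring
        have h2 : 0 ≤ 2*M * q s + 2 * (inner ℝ (y s) (mulVecE (A (x s)) (y s)) : ℝ) := by
          nlinarith [abs_le.1 h1]
        positivity
    have h0 : (0:ℝ) ∈ Ici (0:ℝ) := Set.self_mem_Ici
    have hle2 := hmono h0 ht ht
    simp only [mul_zero, Real.exp_zero, one_mul] at hle2
    have hq0 : 0 < q 0 := by
      rw [hqy]
      exact pow_pos (norm_pos_iff.2 hy0) 2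
    have hqt : 0 < q t := by
      have he : 0 < Real.exp (2*M*t) := Real.exp_pos _
      nlinarith
    rw [hqy] at hqt
    have hyt : y t ≠ 0 := fun h => by simp [h] at hqt
    exact norm_pos_iff.2 hyt
  have hyne : ∀ t ∈ Ici (0:ℝ), y t ≠ 0 := fun t ht => norm_pos_iff.1 (hypos t ht)
  have hqne : ∀ t ∈ Ici (0:ℝ), q t ≠ 0 := by
    intro t ht; rw [hqy]; exact pow_ne_zero _ (ne_of_gt (hypos t ht))
  -- the unit projection
  set u : ℝ → EuclideanSpace ℝ (Fin m) := fun s => ‖y s‖⁻¹ • y s with hudef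
  have hu1 : ∀ t ∈ Ici (0:ℝ), ‖u t‖ = 1 := by
    intro t ht
    rw [hudef]
    simp only [norm_smul, norm_inv, norm_norm]
    exact inv_mul_cancel₀ (ne_of_gt (hypos t ht))
  -- S is not ⊥, extract its real value
  have hSne : S ≠ ⊥ := by
    have hle := le_iSup (fun p : {q : EuclideanSpace ℝ (Fin n) × EuclideanSpace ℝ (Fin m) //
            q.1 ∈ 𝓑 ∧ ‖q.2‖ = 1} =>
          ((Phi A p.val.1 p.val.2
              + fderiv ℝ V p.val (f p.val.1, ell A p.val.1 p.val.2) : ℝ) : EReal))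
      (⟨(x 0, u 0), hxmem 0 Set.self_mem_Ici, hu1 0 Set.self_mem_Ici⟩ :
        {q : EuclideanSpace ℝ (Fin n) × EuclideanSpace ℝ (Fin m) // q.1 ∈ 𝓑 ∧ ‖q.2‖ = 1})
    rw [← hSdef] at hle
    exact fun hbot => by simp [hbot] at hle
  set r : ℝ := S.toReal with hrdef
  have hSr : S = (r : EReal) := (EReal.coe_toReal hlt.ne hSne).symm
  -- the pointwise bound
  have hble : ∀ t ∈ Ici (0:ℝ),
      Phi A (x t) (u t) + fderiv ℝ V (x t, u t) (f (x t), ell A (x t) (u t)) ≤ r := by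
    intro t ht
    have hle := le_iSup (fun p : {q : EuclideanSpace ℝ (Fin n) × EuclideanSpace ℝ (Fin m) //
            q.1 ∈ 𝓑 ∧ ‖q.2‖ = 1} =>
          ((Phi A p.val.1 p.val.2
              + fderiv ℝ V p.val (f p.val.1, ell A p.val.1 p.val.2) : ℝ) : EReal))
      (⟨(x t, u t), hxmem t ht, hu1 t ht⟩ :
        {q : EuclideanSpace ℝ (Fin n) × EuclideanSpace ℝ (Fin m) // q.1 ∈ 𝓑 ∧ ‖q.2‖ = 1})
    rw [← hSdef, hSr] at hle
    exact_mod_cast hle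
  -- derivative of log ‖y‖
  have hL : ∀ t ∈ Ici (0:ℝ), HasDerivWithinAt (fun s => Real.log ‖y s‖)
      (Phi A (x t) (u t)) (Ici 0) t := by
    intro t ht
    have hd := ((hq t ht).log (hqne t ht)).div_const 2
    have heq : ∀ s, Real.log (q s) / 2 = Real.log ‖y s‖ := by
      intro s
      rw [hqy, Real.log_pow]
      push_cast
      ring
    have hd2 : HasDerivWithinAt (fun s => Real.log ‖y s‖)
        (2 * (inner ℝ (y t) (mulVecE (A (x t)) (y t)) : ℝ) / q t / 2) (Ici 0) t :=
      hd.congr (fun s _ => (heq s).symm) (heq t).symm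
    convert hd2 using 1
    rw [hudef, phi_scale A (x t) (y t) (hyne t ht), hqy]
    have h2 : (‖y t‖:ℝ) ^ 2 ≠ 0 := pow_ne_zero _ (ne_of_gt (hypos t ht))
    field_simp
  -- derivative of the unit projection
  have hU : ∀ t ∈ Ici (0:ℝ), HasDerivWithinAt u (ell A (x t) (u t)) (Ici 0) t := by
    intro t ht
    have hrne : ‖y t‖ ≠ 0 := ne_of_gt (hypos t ht)
    have hsq := (hq t ht).sqrt (hqne t ht)
    have heq : ∀ s, Real.sqrt (q s) = ‖y s‖ := by
      intro s; rw [hqy, Real.sqrt_sq (norm_nonneg _)]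
    have hnrm : HasDerivWithinAt (fun s => ‖y s‖)
        ((inner ℝ (y t) (mulVecE (A (x t)) (y t)) : ℝ) / ‖y t‖) (Ici 0) t := by
      have hd2 : HasDerivWithinAt (fun s => ‖y s‖)
          (2 * (inner ℝ (y t) (mulVecE (A (x t)) (y t)) : ℝ) / (2 * Real.sqrt (q t)))
          (Ici 0) t := hsq.congr (fun s _ => (heq s).symm) (heq t).symm
      convert hd2 using 1
      rw [heq]
      ring
    have hinv := hnrm.inv hrne
    have hsm := hinv.smul (hyode t ht)
    have : HasDerivWithinAt u
        (‖y t‖⁻¹ • mulVecE (A (x t)) (y t)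
          + (-((inner ℝ (y t) (mulVecE (A (x t)) (y t)) : ℝ) / ‖y t‖) / ‖y t‖ ^ 2) • y t)
        (Ici 0) t := by
      exact hsm
    rw [hudef]
    rw [ell_scale A (x t) (y t) (hyne t ht)]
    exact this
  -- derivative of t ↦ V (x t, u t)
  have hVdiff : Differentiable ℝ V := hV.differentiable one_ne_zero
  have hW : ∀ t ∈ Ici (0:ℝ), HasDerivWithinAt (fun s => V (x s, u s))
      (fderiv ℝ V (x t, u t) (f (x t), ell A (x t) (u t))) (Ici 0) t := by
    intro t ht
    exact ((hVdiff (x t, u t)).hasFDerivAt).comp_hasDerivWithinAt t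
      (HasDerivWithinAt.prodMk (hxode t ht) (hU t ht))
  -- the key monotone function:  r*t - (log‖y t‖ + V(x t, u t))
  have hmono2 : MonotoneOn
      (fun s => r * s - (Real.log ‖y s‖ + V (x s, u s))) (Ici 0) := by
    apply aux_mono _ (fun s => r - (Phi A (x s) (u s)
      + fderiv ℝ V (x s, u s) (f (x s), ell A (x s) (u s))))
    · intro s hs
      have hid : HasDerivWithinAt (fun s : ℝ => r * s) r (Ici 0) s := by
        simpa using ((hasDerivAt_id s).const_mul r).hasDerivWithinAt
      exact hid.sub ((hL s hs).add (hW s hs))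
    · intro s hs
      linarith [hble s hs]
  -- bound on V over the compact set
  obtain ⟨C, hC⟩ := (hKcomp.prod
    (isCompact_sphere (0 : EuclideanSpace ℝ (Fin m)) 1)).exists_bound_of_continuousOn
    (hV.continuous.continuousOn)
  have hWbdd : ∀ t ∈ Ici (0:ℝ), |V (x t, u t)| ≤ C := by
    intro t ht
    have hmemp : (x t, u t) ∈ closure (x '' Ici 0) ×ˢ Metric.sphere (0 : EuclideanSpace ℝ (Fin m)) 1 :=
      mem_prod.2 ⟨hxK t ht, mem_sphere_zero_iff_norm.2 (hu1 t ht)⟩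
    simpa using hC _ hmemp
  set B : ℝ := Real.log ‖y 0‖ + 2 * C with hBdef
  have hkey : ∀ t ∈ Ici (0:ℝ), Real.log ‖y t‖ ≤ r * t + B := by
    intro t ht
    have := hmono2 Set.self_mem_Ici ht ht
    have h1 := hWbdd 0 Set.self_mem_Ici
    have h2 := hWbdd t ht
    rw [abs_le] at h1 h2
    simp only [mul_zero] at this
    rw [hBdef]
    linarith
  -- conclude using the limsup comparison
  rw [hSr]
  have hev : ∀ᶠ t in atTop, ((1 / t * Real.log ‖y t‖ : ℝ) : EReal)
      ≤ ((r + B / t : ℝ) : EReal) := by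
    filter_upwards [eventually_ge_atTop (1:ℝ)] with t ht
    have ht0 : (0:ℝ) < t := lt_of_lt_of_le one_pos ht
    have h1 : (1:ℝ)/t * Real.log ‖y t‖ ≤ 1/t * (r * t + B) := by
      apply mul_le_mul_of_nonneg_left (hkey t (le_of_lt ht0))
      positivity
    have h2 : (1:ℝ)/t * (r * t + B) = r + B / t := by
      field_simp
    rw [h2] at h1
    exact_mod_cast h1
  have hlim : Tendsto (fun t : ℝ => ((r + B / t : ℝ) : EReal)) atTop (nhds (r : EReal)) := by
    have h1 : Tendsto (fun t : ℝ => r + B / t) atTop (nhds (r + 0)) :=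
      tendsto_const_nhds.add (tendsto_const_nhds.div_atTop tendsto_id)
    rw [add_zero] at h1
    exact (continuous_coe_real_ereal.tendsto r).comp h1
  calc limsup (fun t => ((1 / t * Real.log ‖y t‖ : ℝ) : EReal)) atTop
      ≤ limsup (fun t : ℝ => ((r + B / t : ℝ) : EReal)) atTop := limsup_le_limsup hev
    _ = (r : EReal) := hlim.limsup_eq
end

section
/- Let A : [0,∞) → ℝ^{m×m} be continuous, and for each y₀ ∈ ℝ^m let y(·;y₀) : [0,∞) → ℝ^m denote the unique differentiable solution of y′(t) = A(t)y(t), y(0) = y₀. Define μ = sup over unit vectors y₀ of limsup_{t→∞} (1/t) log|y(t;y₀)|. If B ∈ ℝ satisfies B > μ, then there exist constants K > 0 and λ > 0 such that e^{−Bt}|y(t;y₀)| ≤ K e^{−λt} |y₀| for all t ≥ 0 and all y₀ ∈ ℝ^m. -/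
open Filter Set Bornology

set_option maxHeartbeats 1000000
set_option synthInstance.maxHeartbeats 400000

/-- Linearity of the solution family in the initial condition, via uniqueness of solutions
(Grönwall). -/
theorem stmt_8_lin_aux {m : ℕ} (A : ℝ → Matrix (Fin m) (Fin m) ℝ)
    (hA : ContinuousOn A (Ici 0))
    (y : EuclideanSpace ℝ (Fin m) → ℝ → EuclideanSpace ℝ (Fin m))
    (hy0 : ∀ y₀, y y₀ 0 = y₀)
    (hyode : ∀ y₀, ∀ t ∈ Ici (0 : ℝ),
      HasDerivWithinAt (y y₀) (mulVecE (A t) (y y₀ t)) (Ici 0) t)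
    (y₀ : EuclideanSpace ℝ (Fin m)) (b : ℝ) (hb : 0 ≤ b) :
    y y₀ b = ∑ i, y₀ i • y (EuclideanSpace.single i (1:ℝ)) b := by
  set Φ : ℝ → (EuclideanSpace ℝ (Fin m) →L[ℝ] EuclideanSpace ℝ (Fin m)) :=
    fun t => Matrix.toEuclideanCLM (𝕜 := ℝ) (A t) with hΦ
  have hΦcont : ContinuousOn Φ (Icc 0 b) := by
    let L : Matrix (Fin m) (Fin m) ℝ →ₗ[ℝ]
        (EuclideanSpace ℝ (Fin m) →L[ℝ] EuclideanSpace ℝ (Fin m)) :=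
      { toFun := fun M => Matrix.toEuclideanCLM (𝕜 := ℝ) M,
        map_add' := fun a b => map_add _ a b,
        map_smul' := fun c a => map_smul _ c a }
    exact L.continuous_of_finiteDimensional.comp_continuousOn
      (hA.mono (Icc_subset_Ici_self))
  obtain ⟨t₁, ht₁, hC⟩ := (isCompact_Icc (a := (0:ℝ)) (b := b)).exists_isMaxOn
    ⟨0, le_refl 0, hb⟩ (continuous_norm.comp_continuousOn hΦcont)
  set τ : ℝ → ℝ := fun t => max 0 (min t b) with hτ
  have hτmem : ∀ t, τ t ∈ Icc (0:ℝ) b := fun t =>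
    ⟨le_max_left _ _, max_le (hb) (min_le_right _ _)⟩
  have hτeq : ∀ t ∈ Icc (0:ℝ) b, τ t = t := by
    intro t ht
    simp [hτ, min_eq_left ht.2, max_eq_right ht.1]
  set v : ℝ → EuclideanSpace ℝ (Fin m) → EuclideanSpace ℝ (Fin m) :=
    fun t x => Φ (τ t) x with hv
  have hlip : ∀ t, LipschitzOnWith ‖Φ t₁‖₊ (v t) univ := by
    intro t
    refine ((Φ (τ t)).lipschitz.weaken ?_).lipschitzOnWith
    have := hC (hτmem t)
    simpa [← NNReal.coe_le_coe] using this
  set g : ℝ → EuclideanSpace ℝ (Fin m) :=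
    fun t => ∑ i, y₀ i • y (EuclideanSpace.single i (1:ℝ)) t with hg
  have hcontsol : ∀ z : EuclideanSpace ℝ (Fin m), ContinuousOn (y z) (Icc 0 b) := fun z t ht =>
    ((hyode z t ht.1).continuousWithinAt).mono Icc_subset_Ici_self
  have hmvE : ∀ t x, mulVecE (A t) x = Φ t x := fun _ _ => rfl
  have key := ODE_solution_unique_of_mem_Icc_right (v := v) (s := fun _ => univ)
    (K := ‖Φ t₁‖₊) (fun t _ => hlip t)
    (f := y y₀) (g := g) (a := 0) (b := b)
    (hcontsol y₀)
    (by
      intro t ht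
      have h2 : v t (y y₀ t) = mulVecE (A t) (y y₀ t) := by
        rw [hmvE, hv]
        simp only [hτeq t ⟨ht.1, ht.2.le⟩]
      rw [h2]
      exact (hyode y₀ t ht.1).mono (Ici_subset_Ici.2 ht.1))
    (fun t _ => mem_univ _)
    (continuousOn_finset_sum _ (fun i _ => (hcontsol (EuclideanSpace.single i (1:ℝ))).const_smul (y₀ i)))
    (by
      intro t ht
      have h1 : HasDerivWithinAt g
          (∑ i, y₀ i • mulVecE (A t) (y (EuclideanSpace.single i (1:ℝ)) t)) (Ici t) t := by
        apply HasDerivWithinAt.fun_sum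
        intro i _
        exact ((hyode _ t ht.1).mono (Ici_subset_Ici.2 ht.1)).const_smul (y₀ i)
      have h2 : (∑ i, y₀ i • mulVecE (A t) (y (EuclideanSpace.single i (1:ℝ)) t)) = v t (g t) := by
        rw [hv]
        simp only [hτeq t ⟨ht.1, ht.2.le⟩, hg, map_sum, map_smul, hmvE]
      rwa [h2] at h1)
    (fun t _ => mem_univ _)
    (by
      rw [hy0]
      simp only [hg, hy0]
      have := (EuclideanSpace.basisFun (Fin m) ℝ).toBasis.sum_repr y₀
      symm
      simpa [EuclideanSpace.basisFun_apply] using this)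
  exact key ⟨hb, le_refl b⟩

/-- Lemma 2.5(2): uniform exponential decay of the spectrum-shifted tangent
dynamics: for a continuous time-dependent linear system `y' = A(t)y` with solution family
`y(·;y₀)` and top exponent `μ = sup_{|y₀|=1} limsup (1/t) log|y(t;y₀)|`, any shift `B > μ`
gives constants `K > 0` and `λ > 0` with `e^{−Bt}|y(t;y₀)| ≤ K e^{−λt}|y₀|` for all `t ≥ 0`
and all `y₀`. -/
theorem stmt_8 {m : ℕ} (A : ℝ → Matrix (Fin m) (Fin m) ℝ) (hA : ContinuousOn A (Ici 0))
    (y : EuclideanSpace ℝ (Fin m) → ℝ → EuclideanSpace ℝ (Fin m))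
    (hy0 : ∀ y₀, y y₀ 0 = y₀)
    (hyode : ∀ y₀, ∀ t ∈ Ici (0 : ℝ),
      HasDerivWithinAt (y y₀) (mulVecE (A t) (y y₀ t)) (Ici 0) t)
    (B : ℝ)
    (hB : (⨆ y₀ : {v : EuclideanSpace ℝ (Fin m) // ‖v‖ = 1},
      limsup (fun t => ((1 / t * Real.log ‖y y₀.val t‖ : ℝ) : EReal)) atTop) < (B : EReal)) :
    ∃ K > (0 : ℝ), ∃ lam > (0 : ℝ), ∀ y₀ : EuclideanSpace ℝ (Fin m), ∀ t ∈ Ici (0 : ℝ),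
      Real.exp (-B * t) * ‖y y₀ t‖ ≤ K * Real.exp (-lam * t) * ‖y₀‖ := by
  have hlin : ∀ (y₀ : EuclideanSpace ℝ (Fin m)) (b : ℝ), 0 ≤ b →
      y y₀ b = ∑ i, y₀ i • y (EuclideanSpace.single i (1:ℝ)) b :=
    fun y₀ b hb => stmt_8_lin_aux A hA y hy0 hyode y₀ b hb
  obtain ⟨z, hz1, hz2⟩ := exists_between hB
  have hzbot : z ≠ ⊥ := (lt_of_le_of_lt bot_le hz1).ne'
  have hztop : z ≠ ⊤ := (hz2.trans (EReal.coe_lt_top B)).ne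
  set β := z.toReal with hβdef
  have hzc : (β : EReal) = z := EReal.coe_toReal hztop hzbot
  have hβB : β < B := by rw [← EReal.coe_lt_coe_iff, hzc]; exact hz2
  have key : ∀ i : Fin m, ∃ Ki : ℝ, 0 < Ki ∧ ∀ t : ℝ, 0 ≤ t →
      ‖y (EuclideanSpace.single i (1:ℝ)) t‖ ≤ Ki * Real.exp (β * t) := by
    intro i
    have hunit : ‖(EuclideanSpace.single i (1:ℝ) : EuclideanSpace ℝ (Fin m))‖ = 1 := by
      simp
    have hle : limsup
        (fun t => ((1 / t * Real.log ‖y (EuclideanSpace.single i (1:ℝ)) t‖ : ℝ) : EReal)) atTop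
        < z :=
      lt_of_le_of_lt (le_iSup (fun y₀ : {v : EuclideanSpace ℝ (Fin m) // ‖v‖ = 1} =>
        limsup (fun t => ((1 / t * Real.log ‖y y₀.val t‖ : ℝ) : EReal)) atTop)
        ⟨EuclideanSpace.single i (1:ℝ), hunit⟩) hz1
    have hev := eventually_lt_of_limsup_lt hle
    rw [eventually_atTop] at hev
    obtain ⟨T, hT⟩ := hev
    set T' := max T 1 with hT'def
    have hT'pos : (0:ℝ) < T' := lt_of_lt_of_le one_pos (le_max_right T 1)
    have hcont : ContinuousOn (fun t => ‖y (EuclideanSpace.single i (1:ℝ)) t‖) (Icc 0 T') := by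
      apply continuous_norm.comp_continuousOn
      intro t ht
      exact ((hyode _ t ht.1).continuousWithinAt).mono Icc_subset_Ici_self
    obtain ⟨t₁, ht₁, hCmax⟩ := (isCompact_Icc (a := (0:ℝ)) (b := T')).exists_isMaxOn
      ⟨0, le_refl 0, hT'pos.le⟩ hcont
    set C := ‖y (EuclideanSpace.single i (1:ℝ)) t₁‖ with hCdef
    have hC0 : 0 ≤ C := norm_nonneg _
    refine ⟨max ((C + 1) * Real.exp (|β| * T')) 1,
      lt_of_lt_of_le one_pos (le_max_right _ _), ?_⟩
    intro t ht
    have hexp_nonneg : (0:ℝ) ≤ Real.exp (β * t) := (Real.exp_pos _).le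
    rcases le_or_gt t T' with h | h
    · have h1 : ‖y (EuclideanSpace.single i (1:ℝ)) t‖ ≤ C := hCmax ⟨ht, h⟩
      have h2 : Real.exp (-(|β| * T')) ≤ Real.exp (β * t) := by
        apply Real.exp_le_exp.2
        have h3 : |β| * t ≤ |β| * T' := mul_le_mul_of_nonneg_left h (abs_nonneg β)
        have h4 : -|β| * t ≤ β * t := mul_le_mul_of_nonneg_right (neg_abs_le β) ht
        nlinarith
      have h5 : C ≤ (C + 1) * Real.exp (|β| * T') * Real.exp (β * t) := by
        have h6 : (C + 1) * Real.exp (|β| * T') * Real.exp (-(|β| * T')) = C + 1 := by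
          rw [mul_assoc, ← Real.exp_add]
          simp
        nlinarith [Real.exp_pos (|β| * T'), Real.exp_pos (-(|β| * T'))]
      calc ‖y (EuclideanSpace.single i (1:ℝ)) t‖ ≤ C := h1
        _ ≤ (C + 1) * Real.exp (|β| * T') * Real.exp (β * t) := h5
        _ ≤ max ((C + 1) * Real.exp (|β| * T')) 1 * Real.exp (β * t) :=
            mul_le_mul_of_nonneg_right (le_max_left _ _) hexp_nonneg
    · have htpos : 0 < t := lt_trans hT'pos h
      have hlt := hT t (le_trans (le_max_left T 1) h.le)
      have hreal : 1 / t * Real.log ‖y (EuclideanSpace.single i (1:ℝ)) t‖ < β := by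
        rw [← hzc] at hlt
        exact_mod_cast hlt
      have hlog : Real.log ‖y (EuclideanSpace.single i (1:ℝ)) t‖ < β * t := by
        rw [one_div, inv_mul_eq_div] at hreal
        calc Real.log ‖y (EuclideanSpace.single i (1:ℝ)) t‖
            = (Real.log ‖y (EuclideanSpace.single i (1:ℝ)) t‖ / t) * t := by
              field_simp
          _ < β * t := by
              exact mul_lt_mul_of_pos_right hreal htpos
      rcases eq_or_lt_of_le (norm_nonneg (y (EuclideanSpace.single i (1:ℝ)) t)) with h0 | h0
      · rw [← h0]; positivity
      · have h7 := (Real.log_lt_iff_lt_exp h0).1 hlog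
        calc ‖y (EuclideanSpace.single i (1:ℝ)) t‖ ≤ Real.exp (β * t) := h7.le
          _ ≤ max ((C + 1) * Real.exp (|β| * T')) 1 * Real.exp (β * t) :=
              le_mul_of_one_le_left hexp_nonneg (le_max_right _ _)
  choose Kf hKpos hK using key
  have hsum0 : (0:ℝ) ≤ ∑ i, Kf i := Finset.sum_nonneg fun i _ => (hKpos i).le
  refine ⟨(∑ i, Kf i) + 1, by linarith, B - β, by linarith, ?_⟩
  intro y₀ t ht
  have ht0 : (0:ℝ) ≤ t := ht
  have hcoord : ∀ i : Fin m, |y₀ i| ≤ ‖y₀‖ := by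
    intro i
    rw [EuclideanSpace.norm_eq, ← Real.sqrt_sq_eq_abs]
    apply Real.sqrt_le_sqrt
    refine (Finset.single_le_sum (f := fun j => ‖y₀ j‖^2)
      (fun j _ => by positivity) (Finset.mem_univ i)).trans_eq' ?_
    simp [Real.norm_eq_abs, sq_abs]
  have hbound : ‖y y₀ t‖ ≤ (∑ i, Kf i) * Real.exp (β * t) * ‖y₀‖ := by
    rw [hlin y₀ t ht0]
    calc ‖∑ i, y₀ i • y (EuclideanSpace.single i (1:ℝ)) t‖
        ≤ ∑ i, ‖y₀ i • y (EuclideanSpace.single i (1:ℝ)) t‖ := norm_sum_le _ _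
      _ = ∑ i, |y₀ i| * ‖y (EuclideanSpace.single i (1:ℝ)) t‖ := by
          simp [norm_smul, Real.norm_eq_abs]
      _ ≤ ∑ i, ‖y₀‖ * (Kf i * Real.exp (β * t)) :=
          Finset.sum_le_sum (fun i _ => mul_le_mul (hcoord i) (hK i t ht0)
            (norm_nonneg _) (norm_nonneg _))
      _ = (∑ i, Kf i) * Real.exp (β * t) * ‖y₀‖ := by
          rw [← Finset.mul_sum, ← Finset.sum_mul]; ring
  calc Real.exp (-B * t) * ‖y y₀ t‖
      ≤ Real.exp (-B * t) * ((∑ i, Kf i) * Real.exp (β * t) * ‖y₀‖) :=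
        mul_le_mul_of_nonneg_left hbound (Real.exp_pos _).le
    _ = (∑ i, Kf i) * (Real.exp (-B * t) * Real.exp (β * t)) * ‖y₀‖ := by ring
    _ = (∑ i, Kf i) * Real.exp (-(B - β) * t) * ‖y₀‖ := by
        rw [← Real.exp_add]; ring_nf
    _ ≤ ((∑ i, Kf i) + 1) * Real.exp (-(B - β) * t) * ‖y₀‖ := by
        have h8 : (0:ℝ) ≤ Real.exp (-(B - β) * t) * ‖y₀‖ := by positivity
        nlinarith
end

section
/- Let 𝓑 ⊆ ℝⁿ, let f : 𝓑 → ℝⁿ and A : 𝓑 → ℝ^{m×m} be continuous, and let B ∈ ℝ. Suppose V : ℝⁿ × ℝ^m → ℝ is continuously differentiable and satisfies V(x,w) ≥ |w|² and f(x)·D_xV(x,w) + ((A(x) − B·I)w)·D_wV(x,w) ≤ 0 for all (x,w) ∈ 𝓑 × ℝ^m. Then for every differentiable solution x : [0,∞) → 𝓑 of x′(t) = f(x(t)) and every differentiable y : [0,∞) → ℝ^m with y′(t) = A(x(t))y(t) and y(0) ≠ 0, one has limsup_{t→∞} (1/t) log|y(t)| ≤ B. -/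
open Filter Set Bornology

lemma continuous_toEuclideanCLM {m : ℕ} :
    Continuous (fun M : Matrix (Fin m) (Fin m) ℝ =>
      (Matrix.toEuclideanCLM (𝕜 := ℝ) M :
        EuclideanSpace ℝ (Fin m) →L[ℝ] EuclideanSpace ℝ (Fin m))) :=
  LinearMap.continuous_of_finiteDimensional
    { toFun := fun M => Matrix.toEuclideanCLM (𝕜 := ℝ) M,
      map_add' := fun a b => by ext v; simp [Matrix.ofLp_toEuclideanCLM],
      map_smul' := fun (c : ℝ) a => by ext v; simp [Matrix.ofLp_toEuclideanCLM] }


/-- per-trajectory content of Proposition 2.6(1), the shifted spectrum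
bound: if `V` is `C¹` with `V(x,w) ≥ |w|²` and
`f(x)·D_xV(x,w) + ((A(x) − B·I)w)·D_wV(x,w) ≤ 0` on `𝓑 × ℝ^m`, then along every trajectory
of `x' = f(x)` in `𝓑`, every nonzero solution of the tangent dynamics `y' = A(x(t))y`
satisfies `limsup (1/t) log|y(t)| ≤ B`. -/
theorem stmt_9 {n m : ℕ} (𝓑 : Set (EuclideanSpace ℝ (Fin n)))
    (f : EuclideanSpace ℝ (Fin n) → EuclideanSpace ℝ (Fin n))
    (A : EuclideanSpace ℝ (Fin n) → Matrix (Fin m) (Fin m) ℝ)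
    (hf : ContinuousOn f 𝓑) (hA : ContinuousOn A 𝓑)
    (B : ℝ)
    (V : EuclideanSpace ℝ (Fin n) × EuclideanSpace ℝ (Fin m) → ℝ) (hV : ContDiff ℝ 1 V)
    (hVlb : ∀ x ∈ 𝓑, ∀ w : EuclideanSpace ℝ (Fin m), ‖w‖ ^ 2 ≤ V (x, w))
    (hVlie : ∀ x ∈ 𝓑, ∀ w : EuclideanSpace ℝ (Fin m),
      fderiv ℝ V (x, w) (f x, mulVecE (A x) w - B • w) ≤ 0)
    (x : ℝ → EuclideanSpace ℝ (Fin n))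
    (hxmem : ∀ t ∈ Ici (0 : ℝ), x t ∈ 𝓑)
    (hxode : ∀ t ∈ Ici (0 : ℝ), HasDerivWithinAt x (f (x t)) (Ici 0) t)
    (y : ℝ → EuclideanSpace ℝ (Fin m)) (hy0 : y 0 ≠ 0)
    (hyode : ∀ t ∈ Ici (0 : ℝ), HasDerivWithinAt y (mulVecE (A (x t)) (y t)) (Ici 0) t) :
    limsup (fun t => ((1 / t * Real.log ‖y t‖ : ℝ) : EReal)) atTop ≤ (B : EReal) := by
  have hxc : ContinuousOn x (Ici 0) := fun t ht => (hxode t ht).continuousWithinAt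
  have hyc : ContinuousOn y (Ici 0) := fun t ht => (hyode t ht).continuousWithinAt
  -- the rescaled solution w
  set w : ℝ → EuclideanSpace ℝ (Fin m) := fun t => Real.exp (-B * t) • y t with hwdef
  have hw0 : w 0 = y 0 := by simp [hwdef]
  have hwode : ∀ t ∈ Ici (0 : ℝ), HasDerivWithinAt w
      (mulVecE (A (x t)) (w t) - B • w t) (Ici 0) t := by
    intro t ht
    have h1 : HasDerivWithinAt (fun t : ℝ => Real.exp (-B * t))
        (-B * Real.exp (-B * t)) (Ici 0) t := by
      have := ((Real.hasDerivAt_exp (-B * t)).comp t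
        ((hasDerivAt_id t).const_mul (-B))).hasDerivWithinAt (s := Ici 0)
      simpa [Function.comp_def, mul_comm] using this
    have h2 := h1.smul (hyode t ht)
    have heq : Real.exp (-B * t) • mulVecE (A (x t)) (y t) + (-B * Real.exp (-B * t)) • y t
        = mulVecE (A (x t)) (w t) - B • w t := by
      simp only [hwdef, mulVecE_smul, smul_smul, sub_eq_add_neg, ← neg_smul]
      ring_nf
    rw [← heq]
    exact h2
  -- the Lyapunov function along the trajectory
  have hVd : Differentiable ℝ V := hV.differentiable one_ne_zero
  set g : ℝ → ℝ := fun t => V (x t, w t) with hgdef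
  have hgd : ∀ t ∈ Ici (0 : ℝ), HasDerivWithinAt g
      (fderiv ℝ V (x t, w t) (f (x t), mulVecE (A (x t)) (w t) - B • w t)) (Ici 0) t :=
    fun t ht => (hVd (x t, w t)).hasFDerivAt.comp_hasDerivWithinAt t
      (HasDerivWithinAt.prodMk (hxode t ht) (hwode t ht))
  have hganti : AntitoneOn g (Ici 0) := by
    apply antitoneOn_of_deriv_nonpos (convex_Ici 0)
    · exact fun t ht => (hgd t ht).continuousWithinAt
    · intro t ht
      rw [interior_Ici] at ht
      exact ((hgd t (mem_Ici.mpr (mem_Ioi.mp ht).le)).hasDerivAt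
        (Ici_mem_nhds (mem_Ioi.mp ht))).differentiableAt.differentiableWithinAt
    · intro t ht
      rw [interior_Ici] at ht
      rw [((hgd t (mem_Ici.mpr (mem_Ioi.mp ht).le)).hasDerivAt (Ici_mem_nhds (mem_Ioi.mp ht))).deriv]
      exact hVlie (x t) (hxmem t (mem_Ici.mpr (mem_Ioi.mp ht).le)) (w t)
  set C : ℝ := V (x 0, y 0) with hCdef
  have hC0 : 0 < C := by
    have h1 : (0 : ℝ) < ‖y 0‖ ^ 2 := pow_pos (norm_pos_iff.mpr hy0) 2
    exact lt_of_lt_of_le h1 (hVlb (x 0) (hxmem 0 self_mem_Ici) (y 0))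
  have hwb : ∀ t ∈ Ici (0 : ℝ), ‖w t‖ ≤ Real.sqrt C := by
    intro t ht
    have h1 : ‖w t‖ ^ 2 ≤ g t := hVlb (x t) (hxmem t ht) (w t)
    have h2 : g t ≤ g 0 := hganti self_mem_Ici ht (mem_Ici.mp ht)
    have h3 : g 0 = C := by show V (x 0, w 0) = C; rw [hw0]
    calc ‖w t‖ = Real.sqrt (‖w t‖ ^ 2) := (Real.sqrt_sq (norm_nonneg _)).symm
      _ ≤ Real.sqrt C := Real.sqrt_le_sqrt (by linarith)
  have hbound : ∀ t ∈ Ici (0 : ℝ), ‖y t‖ ≤ Real.sqrt C * Real.exp (B * t) := by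
    intro t ht
    have h1 : ‖w t‖ = Real.exp (-B * t) * ‖y t‖ := by
      rw [hwdef]
      simp [norm_smul, abs_of_pos (Real.exp_pos _)]
    have h2 := hwb t ht
    rw [h1] at h2
    have h3 := mul_le_mul_of_nonneg_left h2 (Real.exp_pos (B * t)).le
    calc ‖y t‖ = Real.exp (B * t) * (Real.exp (-B * t) * ‖y t‖) := by
          rw [← mul_assoc, ← Real.exp_add]; ring_nf; simp
      _ ≤ Real.exp (B * t) * Real.sqrt C := h3
      _ = Real.sqrt C * Real.exp (B * t) := mul_comm _ _
  -- y never vanishes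
  have hynz : ∀ s : ℝ, 0 < s → y s ≠ 0 := by
    intro s hs hys0
    obtain ⟨K, hK⟩ : ∃ K, ∀ t ∈ Icc (0 : ℝ) s,
        ‖(Matrix.toEuclideanCLM (𝕜 := ℝ) (A (x t)) :
          EuclideanSpace ℝ (Fin m) →L[ℝ] EuclideanSpace ℝ (Fin m))‖ ≤ K := by
      apply IsCompact.exists_bound_of_continuousOn isCompact_Icc
      exact continuous_toEuclideanCLM.comp_continuousOn
        ((hA.comp (hxc.mono (Icc_subset_Ici_self))
          (fun t ht => hxmem t ht.1)).mono (subset_refl _))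
    set z : ℝ → EuclideanSpace ℝ (Fin m) := fun τ => y (s - τ) with hzdef
    have hmapsTo : ∀ τ ∈ Icc (0 : ℝ) s, MapsTo (fun u : ℝ => s - u) (Icc τ s) (Ici 0) := by
      intro τ hτ u hu
      simp only [mem_Ici]
      linarith [hu.2]
    have hzc : ContinuousOn z (Icc 0 s) := by
      apply hyc.comp ((continuous_const.sub continuous_id).continuousOn)
      intro u hu
      simp only [mem_Ici, id_eq, Pi.sub_apply]
      linarith [hu.2]
    have hzd : ∀ τ ∈ Ico (0 : ℝ) s, HasDerivWithinAt z
        ((fun τ => (-1 : ℝ) • mulVecE (A (x (s - τ))) (y (s - τ))) τ) (Ici τ) τ := by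
      intro τ hτ
      have hsub : HasDerivWithinAt (fun u : ℝ => s - u) (-1) (Icc τ s) τ :=
        ((hasDerivAt_id τ).const_sub s).hasDerivWithinAt
      have hmem : s - τ ∈ Ici (0 : ℝ) := by
        simp only [mem_Ici]; linarith [hτ.2]
      have hcomp := (hyode (s - τ) hmem).scomp τ hsub (hmapsTo τ ⟨hτ.1, hτ.2.le⟩)
      exact hcomp.mono_of_mem_nhdsWithin (Icc_mem_nhdsGE_of_mem ⟨le_rfl, hτ.2⟩)
    have hz0 : ‖z 0‖ ≤ 0 := by
      simp [hzdef, hys0]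
    have hgron := norm_le_gronwallBound_of_norm_deriv_right_le hzc hzd hz0
      (K := K) (ε := 0) ?_ s ⟨hs.le, le_rfl⟩
    · rw [gronwallBound_ε0] at hgron
      simp only [hzdef, sub_self, sub_zero, zero_mul] at hgron
      exact hy0 (norm_le_zero_iff.mp (by simpa using hgron))
    · intro τ hτ
      have hmem : s - τ ∈ Icc (0 : ℝ) s := ⟨by linarith [hτ.2], by linarith [hτ.1]⟩
      have h1 : ‖mulVecE (A (x (s - τ))) (y (s - τ))‖ ≤
          ‖(Matrix.toEuclideanCLM (𝕜 := ℝ) (A (x (s - τ))) :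
            EuclideanSpace ℝ (Fin m) →L[ℝ] EuclideanSpace ℝ (Fin m))‖ * ‖y (s - τ)‖ :=
        ContinuousLinearMap.le_opNorm _ _
      have h2 := mul_le_mul_of_nonneg_right (hK _ hmem) (norm_nonneg (y (s - τ)))
      simp only [norm_smul, norm_neg, norm_one, one_mul, add_zero]
      exact le_trans h1 h2
  -- conclude via limsup comparison
  set D : ℝ := Real.log (Real.sqrt C) with hDdef
  have hev : ∀ᶠ t in atTop, ((1 / t * Real.log ‖y t‖ : ℝ) : EReal)
      ≤ ((D * (1 / t) + B : ℝ) : EReal) := by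
    filter_upwards [eventually_gt_atTop (0 : ℝ)] with t ht
    rw [EReal.coe_le_coe_iff]
    have hyt : (0 : ℝ) < ‖y t‖ := norm_pos_iff.mpr (hynz t ht)
    have hsC : (0 : ℝ) < Real.sqrt C := Real.sqrt_pos.mpr hC0
    have h1 : Real.log ‖y t‖ ≤ D + B * t := by
      calc Real.log ‖y t‖ ≤ Real.log (Real.sqrt C * Real.exp (B * t)) :=
            Real.log_le_log hyt (hbound t ht.le)
        _ = D + B * t := by
            rw [Real.log_mul hsC.ne' (Real.exp_pos _).ne', Real.log_exp]
    have h2 : 1 / t * Real.log ‖y t‖ ≤ 1 / t * (D + B * t) :=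
      mul_le_mul_of_nonneg_left h1 (by positivity)
    calc 1 / t * Real.log ‖y t‖ ≤ 1 / t * (D + B * t) := h2
      _ = D * (1 / t) + B := by field_simp
  have hlim : Tendsto (fun t : ℝ => D * (1 / t) + B) atTop (nhds B) := by
    have h1 : Tendsto (fun t : ℝ => D * (1 / t)) atTop (nhds 0) := by
      simpa using tendsto_inv_atTop_zero.const_mul D
    simpa using h1.add_const B
  calc limsup (fun t => ((1 / t * Real.log ‖y t‖ : ℝ) : EReal)) atTop
      ≤ limsup (fun t => ((D * (1 / t) + B : ℝ) : EReal)) atTop := limsup_le_limsup hev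
    _ = (B : EReal) := Tendsto.limsup_eq (EReal.tendsto_coe.mpr hlim)
end

section
/- Let F₁,…,Fₙ, Φ, V, g₁,…,g_I, h₁,…,h_J be real polynomials in n variables, and B ∈ ℝ. Suppose there exist polynomials σ₀, σ₁, …, σ_I, each a sum of squares of real polynomials, and polynomials ρ₁, …, ρ_J, such that B − Φ − Σᵢ Fᵢ·(∂V/∂Xᵢ) = σ₀ + Σᵢ σᵢ·gᵢ + Σⱼ ρⱼ·hⱼ as polynomials. Let Ω = { x ∈ ℝⁿ : gᵢ(x) ≥ 0 for all i and hⱼ(x) = 0 for all j }. Then for every bounded differentiable function X : [0,∞) → Ω with X′(t) = F(X(t)) for all t ≥ 0, one has limsup_{T→∞} (1/T) ∫₀ᵀ Φ(X(t)) dt ≤ B. -/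
open Filter Set Bornology MvPolynomial

private lemma isSumSq_eval_aux {n : ℕ} (x : Fin n → ℝ) {p : MvPolynomial (Fin n) ℝ}
    (hp : IsSumSq p) : IsSumSq (eval x p) := by
  induction hp with
  | zero => simpa using IsSumSq.zero
  | sq_add a _ ih =>
      simpa [map_add, map_mul] using IsSumSq.sq_add (eval x a) ih

private lemma chain_rule_aux {n : ℕ} (F : Fin n → MvPolynomial (Fin n) ℝ)
    (Y : ℝ → Fin n → ℝ) (t : ℝ)
    (hX : HasDerivWithinAt Y (fun i => eval (Y t) (F i)) (Ici 0) t)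
    (P : MvPolynomial (Fin n) ℝ) :
    HasDerivWithinAt (fun u => eval (Y u) P)
      (∑ i, eval (Y t) (pderiv i P) * eval (Y t) (F i)) (Ici 0) t := by
  classical
  induction P using MvPolynomial.induction_on with
  | C a =>
      simpa [pderiv_C] using hasDerivWithinAt_const t (Ici (0:ℝ)) a
  | add p q hp hq =>
      simpa [map_add, add_mul, Finset.sum_add_distrib, Pi.add_def] using hp.add hq
  | mul_X p j hp =>
      have hXj : HasDerivWithinAt (fun u => Y u j) (eval (Y t) (F j)) (Ici 0) t :=
        hasDerivWithinAt_pi.mp hX j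
      have hmul := hp.mul hXj
      have hper : ∀ i : Fin n, eval (Y t) (pderiv i (p * MvPolynomial.X j))
          = eval (Y t) (pderiv i p) * Y t j
            + eval (Y t) p * (if j = i then 1 else 0) := by
        intro i
        simp only [pderiv_mul, pderiv_X, Pi.single_apply, map_add, map_mul, eval_X,
          apply_ite (eval (Y t)), map_one, map_zero, mul_ite, mul_one, mul_zero]
      have key : ∑ i, eval (Y t) (pderiv i (p * MvPolynomial.X j)) * eval (Y t) (F i)
          = (∑ i, eval (Y t) (pderiv i p) * eval (Y t) (F i)) * Y t j
            + eval (Y t) p * eval (Y t) (F j) := by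
        simp only [hper, add_mul, Finset.sum_add_distrib, Finset.sum_mul]
        congr 1
        · exact Finset.sum_congr rfl fun i _ => by ring
        · simp [mul_ite, ite_mul, Finset.sum_ite_eq]
      rw [key]
      simpa only [map_mul, eval_X, Pi.mul_def] using hmul

/-- Proposition 2.8(1): sum-of-squares relaxation of the auxiliary-function
bound on time averages: if `B − Φ − Σᵢ Fᵢ·∂V/∂Xᵢ` lies in the quadratic module generated by
the polynomials `gᵢ`, `hⱼ` describing the semialgebraic set `Ω` (i.e. it equals
`σ₀ + Σ σᵢgᵢ + Σ ρⱼhⱼ` with each `σ` a sum of squares), then along every bounded solution of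
`X' = F(X)` in `Ω` the infinite-time average of `Φ` is at most `B`. -/
theorem stmt_12 {n I J : ℕ}
    (F : Fin n → MvPolynomial (Fin n) ℝ)
    (Φ V : MvPolynomial (Fin n) ℝ)
    (g : Fin I → MvPolynomial (Fin n) ℝ) (h : Fin J → MvPolynomial (Fin n) ℝ)
    (B : ℝ)
    (hrep : ∃ (σ₀ : MvPolynomial (Fin n) ℝ) (σ : Fin I → MvPolynomial (Fin n) ℝ)
        (ρ : Fin J → MvPolynomial (Fin n) ℝ),
      IsSumSq σ₀ ∧ (∀ i, IsSumSq (σ i)) ∧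
      C B - Φ - ∑ i, F i * pderiv i V
        = σ₀ + ∑ i, σ i * g i + ∑ j, ρ j * h j)
    (Ω : Set (Fin n → ℝ))
    (hΩ : Ω = {x : Fin n → ℝ | (∀ i, 0 ≤ eval x (g i)) ∧ ∀ j, eval x (h j) = 0})
    (X : ℝ → (Fin n → ℝ))
    (hXmem : ∀ t ∈ Ici (0 : ℝ), X t ∈ Ω)
    (hXode : ∀ t ∈ Ici (0 : ℝ),
      HasDerivWithinAt X (fun i => eval (X t) (F i)) (Ici 0) t)
    (hXbdd : IsBounded (X '' Ici 0)) :
    limsup (fun T => (1 / T) * ∫ t in (0 : ℝ)..T, eval (X t) Φ) atTop ≤ B := by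
  classical
  obtain ⟨σ₀, σ, ρ, hσ₀, hσ, heq⟩ := hrep
  set L : ℝ → ℝ := fun t => ∑ i, eval (X t) (pderiv i V) * eval (X t) (F i) with hLdef
  set W : ℝ → ℝ := fun t => eval (X t) V with hWdef
  set u : ℝ → ℝ := fun T => (1 / T) * ∫ t in (0 : ℝ)..T, eval (X t) Φ with hudef
  -- continuity of X
  have hXcont : ContinuousOn X (Ici 0) := fun t ht => (hXode t ht).continuousWithinAt
  have hΦcont : ContinuousOn (fun t => eval (X t) Φ) (Ici 0) :=
    (MvPolynomial.continuous_eval (p := Φ)).comp_continuousOn hXcont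
  have hWcont : ContinuousOn W (Ici 0) :=
    (MvPolynomial.continuous_eval (p := V)).comp_continuousOn hXcont
  have hLcont : ContinuousOn L (Ici 0) := by
    apply continuousOn_finset_sum
    intro i _
    exact ((MvPolynomial.continuous_eval (p := pderiv i V)).comp_continuousOn hXcont).mul
      ((MvPolynomial.continuous_eval (p := F i)).comp_continuousOn hXcont)
  -- pointwise inequality on the trajectory
  have hpt : ∀ t ∈ Ici (0 : ℝ), eval (X t) Φ ≤ B - L t := by
    intro t ht
    have hx := hXmem t ht
    rw [hΩ] at hx
    obtain ⟨hg, hh⟩ := hx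
    have h1 : (0 : ℝ) ≤ eval (X t) (σ₀ + ∑ i, σ i * g i + ∑ j, ρ j * h j) := by
      simp only [map_add, map_sum, map_mul]
      have t1 : (0 : ℝ) ≤ eval (X t) σ₀ := (isSumSq_eval_aux _ hσ₀).nonneg
      have t2 : (0 : ℝ) ≤ ∑ i, eval (X t) (σ i) * eval (X t) (g i) :=
        Finset.sum_nonneg fun i _ => mul_nonneg (isSumSq_eval_aux _ (hσ i)).nonneg (hg i)
      have t3 : ∑ j, eval (X t) (ρ j) * eval (X t) (h j) = 0 :=
        Finset.sum_eq_zero fun j _ => by rw [hh j, mul_zero]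
      linarith
    rw [← heq] at h1
    have h2 : eval (X t) (C B - Φ - ∑ i, F i * pderiv i V)
        = B - eval (X t) Φ - ∑ i, eval (X t) (F i) * eval (X t) (pderiv i V) := by
      simp [map_sub, map_sum, map_mul]
    rw [h2] at h1
    have h3 : L t = ∑ i, eval (X t) (F i) * eval (X t) (pderiv i V) :=
      Finset.sum_congr rfl fun i _ => mul_comm _ _
    rw [h3]
    linarith
  -- uniform bounds on the trajectory
  obtain ⟨R, hR⟩ := hXbdd.subset_closedBall 0
  obtain ⟨MV, hMV⟩ := (isCompact_closedBall (0 : Fin n → ℝ) R).exists_bound_of_continuousOn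
    (MvPolynomial.continuous_eval (p := V)).continuousOn
  obtain ⟨MΦ, hMΦ⟩ := (isCompact_closedBall (0 : Fin n → ℝ) R).exists_bound_of_continuousOn
    (MvPolynomial.continuous_eval (p := Φ)).continuousOn
  have hXin : ∀ t ∈ Ici (0 : ℝ), X t ∈ Metric.closedBall (0 : Fin n → ℝ) R :=
    fun t ht => hR ⟨t, ht, rfl⟩
  have hWbd : ∀ t ∈ Ici (0 : ℝ), |W t| ≤ MV := fun t ht => by
    simpa [Real.norm_eq_abs] using hMV (X t) (hXin t ht)
  have hΦbd : ∀ t ∈ Ici (0 : ℝ), |eval (X t) Φ| ≤ MΦ := fun t ht => by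
    simpa [Real.norm_eq_abs] using hMΦ (X t) (hXin t ht)
  have hMΦ0 : (0 : ℝ) ≤ MΦ := le_trans (abs_nonneg _) (hΦbd 0 Set.self_mem_Ici)
  -- the key estimates for T ≥ 1
  have key : ∀ T : ℝ, 1 ≤ T →
      u T ≤ B + 2 * MV * (1 / T) ∧ -MΦ ≤ u T := by
    intro T hT
    have hT0 : (0 : ℝ) ≤ T := le_trans zero_le_one hT
    have hTpos : (0 : ℝ) < T := lt_of_lt_of_le zero_lt_one hT
    have hIcc : Icc (0 : ℝ) T ⊆ Ici 0 := fun x hx => hx.1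
    have hintΦ : IntervalIntegrable (fun t => eval (X t) Φ) MeasureTheory.volume 0 T := by
      apply ContinuousOn.intervalIntegrable
      rw [uIcc_of_le hT0]
      exact hΦcont.mono hIcc
    have hintL : IntervalIntegrable L MeasureTheory.volume 0 T := by
      apply ContinuousOn.intervalIntegrable
      rw [uIcc_of_le hT0]
      exact hLcont.mono hIcc
    -- FTC for W
    have hFTC : ∫ t in (0 : ℝ)..T, L t = W T - W 0 := by
      apply intervalIntegral.integral_eq_sub_of_hasDeriv_right_of_le hT0
        (hWcont.mono hIcc) _ hintL
      intro x hx
      have hx0 : x ∈ Ici (0 : ℝ) := le_of_lt hx.1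
      have hIoi : Ioi x ⊆ Ici (0 : ℝ) := fun y hy => show (0:ℝ) ≤ y from le_of_lt (lt_of_le_of_lt hx0 hy)
      exact (chain_rule_aux F X x (hXode x hx0) V).mono hIoi
    -- integral inequality
    have hmono : ∫ t in (0 : ℝ)..T, eval (X t) Φ ≤ ∫ t in (0 : ℝ)..T, (B - L t) := by
      apply intervalIntegral.integral_mono_on hT0 hintΦ
        ((intervalIntegrable_const).sub hintL)
      intro x hx
      exact hpt x (hIcc hx)
    have hBL : ∫ t in (0 : ℝ)..T, (B - L t) = B * T - (W T - W 0) := by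
      rw [intervalIntegral.integral_sub intervalIntegrable_const hintL, hFTC,
        intervalIntegral.integral_const]
      simp [mul_comm]
    have hlow : -MΦ * T ≤ ∫ t in (0 : ℝ)..T, eval (X t) Φ := by
      have : ∫ t in (0 : ℝ)..T, (-MΦ) ≤ ∫ t in (0 : ℝ)..T, eval (X t) Φ := by
        apply intervalIntegral.integral_mono_on hT0 intervalIntegrable_const hintΦ
        intro x hx
        have := hΦbd x (hIcc hx)
        linarith [abs_le.mp this |>.1]
      simpa [intervalIntegral.integral_const, mul_comm] using this
    constructor
    · have h5 : ∫ t in (0 : ℝ)..T, eval (X t) Φ ≤ B * T + (W 0 - W T) := by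
        rw [hBL] at hmono; linarith
      have hW0 := hWbd 0 Set.self_mem_Ici
      have hWT := hWbd T hT0
      have h6 : ∫ t in (0 : ℝ)..T, eval (X t) Φ ≤ B * T + 2 * MV := by
        have := abs_le.mp hW0
        have := abs_le.mp hWT
        linarith
      have := mul_le_mul_of_nonneg_left h6 (le_of_lt (one_div_pos.mpr hTpos))
      calc u T ≤ (1 / T) * (B * T + 2 * MV) := this
        _ = B + 2 * MV * (1 / T) := by field_simp
    · have := mul_le_mul_of_nonneg_left hlow (le_of_lt (one_div_pos.mpr hTpos))
      calc (-MΦ : ℝ) = (1 / T) * (-MΦ * T) := by field_simp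
        _ ≤ u T := this
  -- conclude via limsup comparison
  have hev : ∀ᶠ T in atTop, u T ≤ B + 2 * MV * (1 / T) :=
    eventually_atTop.mpr ⟨1, fun T hT => (key T hT).1⟩
  have hlowev : ∀ᶠ T in atTop, -MΦ ≤ u T :=
    eventually_atTop.mpr ⟨1, fun T hT => (key T hT).2⟩
  have h1T : Tendsto (fun T : ℝ => 1 / T) atTop (nhds 0) := by
    simpa [one_div] using tendsto_inv_atTop_zero
  have htend : Tendsto (fun T : ℝ => B + 2 * MV * (1 / T)) atTop (nhds B) := by
    have := (tendsto_const_nhds (x := B) (f := (atTop : Filter ℝ))).add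
      ((tendsto_const_nhds (x := 2 * MV) (f := (atTop : Filter ℝ))).mul h1T)
    simpa using this
  calc limsup u atTop ≤ limsup (fun T => B + 2 * MV * (1 / T)) atTop :=
        limsup_le_limsup hev (isCoboundedUnder_le_of_eventually_le atTop hlowev)
          htend.isBoundedUnder_le
    _ = B := htend.limsup_eq
end
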